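/- arXiv:2002.02323 — 2 statements merged into one kernel-verified Lean document; each statement's English description precedes it below -/
import Mathlib

section
/- If a continuous function φ : [0, R₀] → ℝ satisfies |φ(r)| ≤ (c₁/4) r² + c₂ ∫₀^r (ln r − ln s) s |φ(s)| ds for all r ∈ [0, R₀], then |φ(r)| ≤ ξ(r) for all r ∈ [0, R₀], where ξ is the unique continuous solution of the corresponding integral equation ξ(r) = (c₁/4) r² + c₂ ∫₀^r (ln r − ln s) s ξ(s) ds. -/
open MeasureTheory

theorem volterra_comparison
    (R₀ c₁ c₂ : ℝ) (hR₀ : 0 < R₀) (hc₁ : 0 < c₁) (hc₂ : 0 < c₂)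
    (φ ξ : ℝ → ℝ)
    (hφ : ContinuousOn φ (Set.Icc 0 R₀))
    (hξ : ContinuousOn ξ (Set.Icc 0 R₀))
    (hξeq : ∀ r ∈ Set.Icc 0 R₀,
      ξ r = c₁/4 * r^2 + c₂ * ∫ s in (0:ℝ)..r, (Real.log r - Real.log s) * s * ξ s)
    (hφineq : ∀ r ∈ Set.Icc 0 R₀,
      |φ r| ≤ c₁/4 * r^2 + c₂ * ∫ s in (0:ℝ)..r, (Real.log r - Real.log s) * s * |φ s|) :
    ∀ r ∈ Set.Icc 0 R₀, |φ r| ≤ ξ r := by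
  have hR₀' : (0:ℝ) ≤ R₀ := hR₀.le
  set π : ℝ → ℝ := fun s => min (max s 0) R₀ with hπdef
  have hπcont : Continuous π := (continuous_id.max continuous_const).min continuous_const
  have hπmem : ∀ s, π s ∈ Set.Icc 0 R₀ := fun s =>
    ⟨le_min (le_max_right _ _) hR₀', min_le_right _ _⟩
  have hπid : ∀ s ∈ Set.Icc (0:ℝ) R₀, π s = s := by
    intro s hs
    simp only [hπdef]
    rw [max_eq_left hs.1, min_eq_left hs.2]
  set g : ℝ → ℝ := fun s => max (|φ (π s)| - ξ (π s)) 0 with hgdef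
  have hgcont : Continuous g := by
    have h1 : Continuous fun s => φ (π s) := hφ.comp_continuous hπcont hπmem
    have h2 : Continuous fun s => ξ (π s) := hξ.comp_continuous hπcont hπmem
    exact (h1.abs.sub h2).max continuous_const
  have hgnonneg : ∀ s, 0 ≤ g s := fun s => le_max_right _ _
  have hgval : ∀ s ∈ Set.Icc (0:ℝ) R₀, g s = max (|φ s| - ξ s) 0 := by
    intro s hs
    simp only [hgdef, hπid s hs]
  set C := c₂ * R₀ with hCdef
  have hC : 0 < C := mul_pos hc₂ hR₀
  set F : ℝ → ℝ := fun r => ∫ t in (0:ℝ)..r, g t with hFdef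
  -- key inequality : g r ≤ C * F r on [0, R₀]
  have key : ∀ r ∈ Set.Icc (0:ℝ) R₀, g r ≤ C * F r := by
    intro r hr
    have hr0 : (0:ℝ) ≤ r := hr.1
    have hKcont : Continuous fun s => (Real.log r - Real.log s) * s := by
      have h : Continuous fun s : ℝ => Real.log r * s - s * Real.log s :=
        (continuous_const.mul continuous_id).sub Real.continuous_mul_log
      convert h using 1
      funext s; ring
    have hsub : Set.Icc (0:ℝ) r ⊆ Set.Icc 0 R₀ := Set.Icc_subset_Icc le_rfl hr.2
    have huIcc : Set.uIcc (0:ℝ) r = Set.Icc 0 r := Set.uIcc_of_le hr0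
    have hint : ∀ ψ : ℝ → ℝ, ContinuousOn ψ (Set.Icc 0 R₀) →
        IntervalIntegrable (fun s => (Real.log r - Real.log s) * s * ψ s) volume 0 r := by
      intro ψ hψ
      apply ContinuousOn.intervalIntegrable
      rw [huIcc]
      exact hKcont.continuousOn.mul (hψ.mono hsub)
    have hKnonneg : ∀ s ∈ Set.Icc (0:ℝ) r, 0 ≤ (Real.log r - Real.log s) * s := by
      intro s hs
      rcases eq_or_lt_of_le hs.1 with h0 | h0
      · simp [← h0]
      · exact mul_nonneg (sub_nonneg.2 (Real.log_le_log h0 hs.2)) hs.1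
    have hKle : ∀ s ∈ Set.Icc (0:ℝ) r, (Real.log r - Real.log s) * s ≤ R₀ := by
      intro s hs
      rcases eq_or_lt_of_le hs.1 with h0 | h0
      · rw [← h0]; simpa using hR₀'
      · have hrpos : 0 < r := lt_of_lt_of_le h0 hs.2
        have hlog : Real.log r - Real.log s = Real.log (r/s) :=
          (Real.log_div hrpos.ne' h0.ne').symm
        have h1 : Real.log (r/s) ≤ r/s - 1 :=
          Real.log_le_sub_one_of_pos (div_pos hrpos h0)
        have h2 : (Real.log r - Real.log s) * s ≤ (r/s - 1) * s := by
          rw [hlog]; exact mul_le_mul_of_nonneg_right h1 hs.1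
        have h3 : (r/s - 1) * s = r - s := by field_simp
        have h4 : r ≤ R₀ := hr.2
        linarith [hs.1]
    -- pointwise bound
    have hpt : ∀ s ∈ Set.Icc (0:ℝ) r,
        (Real.log r - Real.log s) * s * (|φ s| - ξ s) ≤ R₀ * g s := by
      intro s hs
      have h1 : |φ s| - ξ s ≤ g s := by
        rw [hgval s (hsub hs)]; exact le_max_left _ _
      calc (Real.log r - Real.log s) * s * (|φ s| - ξ s)
          ≤ (Real.log r - Real.log s) * s * g s :=
            mul_le_mul_of_nonneg_left h1 (hKnonneg s hs)
        _ ≤ R₀ * g s := mul_le_mul_of_nonneg_right (hKle s hs) (hgnonneg s)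
    have hintφ := hint (fun s => |φ s|) hφ.abs
    have hintξ := hint ξ hξ
    have hinth := hint (fun s => |φ s| - ξ s) (hφ.abs.sub hξ)
    have hintR : IntervalIntegrable (fun s => R₀ * g s) volume 0 r :=
      (continuous_const.mul hgcont).intervalIntegrable 0 r
    have hdiff : (∫ s in (0:ℝ)..r, (Real.log r - Real.log s) * s * |φ s|)
        - (∫ s in (0:ℝ)..r, (Real.log r - Real.log s) * s * ξ s)
        = ∫ s in (0:ℝ)..r, (Real.log r - Real.log s) * s * (|φ s| - ξ s) := by
      rw [← intervalIntegral.integral_sub hintφ hintξ]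
      congr 1
      funext s; ring
    have hmono : (∫ s in (0:ℝ)..r, (Real.log r - Real.log s) * s * (|φ s| - ξ s))
        ≤ ∫ s in (0:ℝ)..r, R₀ * g s := by
      apply intervalIntegral.integral_mono_on hr0 hinth hintR hpt
    have hRg : (∫ s in (0:ℝ)..r, R₀ * g s) = R₀ * F r := by
      rw [hFdef]; exact intervalIntegral.integral_const_mul _ _
    have hFnonneg : 0 ≤ F r :=
      intervalIntegral.integral_nonneg hr0 (fun s _ => hgnonneg s)
    have hmain : |φ r| - ξ r ≤ C * F r := by
      have h1 := hφineq r hr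
      have h2 := hξeq r hr
      have h3 : |φ r| - ξ r ≤ c₂ * ((∫ s in (0:ℝ)..r, (Real.log r - Real.log s) * s * |φ s|)
          - (∫ s in (0:ℝ)..r, (Real.log r - Real.log s) * s * ξ s)) := by
        rw [mul_sub]; linarith
      have h4 : c₂ * ((∫ s in (0:ℝ)..r, (Real.log r - Real.log s) * s * |φ s|)
          - (∫ s in (0:ℝ)..r, (Real.log r - Real.log s) * s * ξ s)) ≤ c₂ * (R₀ * F r) := by
        apply mul_le_mul_of_nonneg_left _ hc₂.le
        rw [hdiff, ← hRg]
        exact hmono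
      rw [hCdef, mul_assoc]
      linarith
    rw [hgval r hr]
    exact max_le hmain (mul_nonneg hC.le hFnonneg)
  -- Gronwall argument
  have hFderiv : ∀ x : ℝ, HasDerivAt F (g x) x := by
    intro x
    exact intervalIntegral.integral_hasDerivAt_right (hgcont.intervalIntegrable 0 x)
      (hgcont.stronglyMeasurableAtFilter volume (nhds x)) hgcont.continuousAt
  set G : ℝ → ℝ := fun r => F r * Real.exp (-C * r) with hGdef
  have hGderiv : ∀ x : ℝ, HasDerivAt G ((g x - C * F x) * Real.exp (-C * x)) x := by
    intro x
    have h2 : HasDerivAt (fun y : ℝ => Real.exp (-C * y)) (-C * Real.exp (-C * x)) x := by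
      have h := ((hasDerivAt_id x).const_mul (-C)).exp
      simp only [id] at h
      convert h using 1
      ring
    have h := (hFderiv x).mul h2
    exact h.congr_deriv (by ring)
  have hanti : AntitoneOn G (Set.Icc 0 R₀) := by
    apply antitoneOn_of_deriv_nonpos (convex_Icc 0 R₀)
    · exact fun x _ => (hGderiv x).continuousAt.continuousWithinAt
    · exact fun x _ => (hGderiv x).differentiableAt.differentiableWithinAt
    · intro x hx
      rw [interior_Icc] at hx
      rw [(hGderiv x).deriv]
      have hk := key x ⟨hx.1.le, hx.2.le⟩
      have h1 : g x - C * F x ≤ 0 := by linarith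
      exact mul_nonpos_of_nonpos_of_nonneg h1 (Real.exp_pos _).le
  intro r hr
  have hG : G r ≤ G 0 := hanti (Set.left_mem_Icc.2 hR₀') hr hr.1
  have hG0 : G 0 = 0 := by simp [hGdef, hFdef]
  have hexp : 0 < Real.exp (-C * r) := Real.exp_pos _
  have hFr : F r ≤ 0 := by
    by_contra hcon
    push_neg at hcon
    have : 0 < G r := mul_pos hcon hexp
    linarith
  have hk := key r hr
  have hgr0 : g r ≤ 0 := le_trans hk (by nlinarith)
  have h1 : |φ r| - ξ r ≤ g r := by
    rw [hgval r hr]; exact le_max_left _ _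
  linarith
end

section
/- Define recursively x_0 = 0 and x_{k+1}(r) = ∫₀^r (1/s) ∫₀^s σ (c₁ + c₂ x_k(σ)) dσ ds for continuous functions on [0, R₀]. Then for every k ∈ ℕ and r ∈ [0, R₀], x_k(r) ≤ Σ_{j=1}^k c₁ c₂^{j−1} r^{2j}/(4^j (j!)²); in particular x_k(r) ≤ ξ(r) = Σ_{j=1}^∞ c₁ c₂^{j−1} r^{2j}/(4^j (j!)²) for all k. -/
open MeasureTheory

set_option maxHeartbeats 4000000 in
theorem picard_iterates_bounded
    (R₀ c₁ c₂ : ℝ) (hR₀ : 0 < R₀) (hc₁ : 0 < c₁) (hc₂ : 0 < c₂)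
    (x : ℕ → ℝ → ℝ)
    (h0 : ∀ r : ℝ, x 0 r = 0)
    (hrec : ∀ (k : ℕ) (r : ℝ),
      x (k+1) r = ∫ s in (0:ℝ)..r, (1/s) * ∫ σ in (0:ℝ)..s, σ * (c₁ + c₂ * x k σ)) :
    ∀ k : ℕ, ∀ r ∈ Set.Icc (0:ℝ) R₀,
      x k r ≤ ∑ j ∈ Finset.range k,
        c₁ * c₂ ^ j / (4 ^ (j+1) * ((Nat.factorial (j+1) : ℝ))^2) * r ^ (2*(j+1)) ∧
      x k r ≤ ∑' j : ℕ,
        c₁ * c₂ ^ j / (4 ^ (j+1) * ((Nat.factorial (j+1) : ℝ))^2) * r ^ (2*(j+1)) := by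
  set a : ℕ → ℝ := fun j => c₁ * c₂ ^ j / (4 ^ (j+1) * ((Nat.factorial (j+1) : ℝ))^2)
    with ha
  -- The iterates are exactly the partial sums.
  have key : ∀ k : ℕ, ∀ r : ℝ, x k r = ∑ j ∈ Finset.range k, a j * r ^ (2*(j+1)) := by
    intro k
    induction k with
    | zero => intro r; simp [h0]
    | succ k ih =>
      intro r
      rw [hrec]
      have inner : ∀ s : ℝ, (∫ σ in (0:ℝ)..s, σ * (c₁ + c₂ * x k σ))
          = c₁ * s^2 / 2 + ∑ j ∈ Finset.range k,
              (c₂ * a j) * s ^ (2*j+4) / (2*j+4) := by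
        intro s
        have heq : ∀ σ : ℝ, σ * (c₁ + c₂ * x k σ)
            = c₁ * σ + ∑ j ∈ Finset.range k, (c₂ * a j) * σ ^ (2*j+3) := by
          intro σ
          rw [ih σ, mul_add, mul_comm σ c₁, Finset.mul_sum, Finset.mul_sum]
          congr 1
          exact Finset.sum_congr rfl fun j _ => by ring
        simp only [heq]
        have hint1 : IntervalIntegrable (fun σ : ℝ => c₁ * σ) volume 0 s :=
          (continuous_const.mul continuous_id).intervalIntegrable 0 s
        have hintj : ∀ j : ℕ,
            IntervalIntegrable (fun σ : ℝ => (c₂ * a j) * σ ^ (2*j+3)) volume 0 s :=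
          fun j => (continuous_const.mul (continuous_pow (2*j+3))).intervalIntegrable 0 s
        have hint2 : IntervalIntegrable
            (fun σ : ℝ => ∑ j ∈ Finset.range k, (c₂ * a j) * σ ^ (2*j+3)) volume 0 s :=
          (continuous_finset_sum _ fun j _ =>
            continuous_const.mul (continuous_pow (2*j+3))).intervalIntegrable 0 s
        rw [intervalIntegral.integral_add hint1 hint2,
          intervalIntegral.integral_finset_sum (fun j _ => hintj j)]
        congr 1
        · rw [intervalIntegral.integral_const_mul]
          simp only [integral_id]
          ring
        · apply Finset.sum_congr rfl
          intro j _
          rw [intervalIntegral.integral_const_mul, integral_pow]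
          push_cast
          ring
      simp only [inner]
      have outer : ∀ s : ℝ, (1/s) * (c₁ * s^2 / 2 + ∑ j ∈ Finset.range k,
              (c₂ * a j) * s ^ (2*j+4) / (2*j+4))
          = c₁ * s / 2 + ∑ j ∈ Finset.range k,
              (c₂ * a j) * s ^ (2*j+3) / (2*j+4) := by
        intro s
        rcases eq_or_ne s 0 with rfl | hs
        · simp
        · rw [mul_add, Finset.mul_sum]
          congr 1
          · field_simp
          · apply Finset.sum_congr rfl
            intro j _
            have hpow : s ^ (2*j+4) = s * s ^ (2*j+3) := by ring
            rw [hpow]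
            field_simp
      simp only [outer]
      have hint1 : IntervalIntegrable (fun s : ℝ => c₁ * s / 2) volume 0 r :=
        ((continuous_const.mul continuous_id).div_const _).intervalIntegrable 0 r
      have hintj : ∀ j : ℕ,
          IntervalIntegrable (fun s : ℝ => (c₂ * a j) * s ^ (2*j+3) / (2*j+4)) volume 0 r :=
        fun j => ((continuous_const.mul (continuous_pow (2*j+3))).div_const _).intervalIntegrable 0 r
      have hint2 : IntervalIntegrable
          (fun s : ℝ => ∑ j ∈ Finset.range k, (c₂ * a j) * s ^ (2*j+3) / (2*j+4)) volume 0 r :=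
        (continuous_finset_sum _ fun j _ =>
          (continuous_const.mul (continuous_pow (2*j+3))).div_const _).intervalIntegrable 0 r
      rw [intervalIntegral.integral_add hint1 hint2,
        intervalIntegral.integral_finset_sum (fun j _ => hintj j)]
      rw [Finset.sum_range_succ']
      rw [add_comm]
      congr 1
      · apply Finset.sum_congr rfl
        intro j _
        rw [intervalIntegral.integral_div, intervalIntegral.integral_const_mul, integral_pow]
        simp only [ha]
        have hfact : ((Nat.factorial (j+1+1) : ℝ)) = ((j:ℝ)+2) * (Nat.factorial (j+1) : ℝ) := by
          push_cast [Nat.factorial_succ]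
          ring
        rw [hfact]
        have hf : (0:ℝ) < (Nat.factorial (j+1) : ℝ) := by
          exact_mod_cast Nat.factorial_pos _
        rw [zero_pow (by omega)]
        push_cast
        field_simp
        ring
      · rw [intervalIntegral.integral_div, intervalIntegral.integral_const_mul, integral_id]
        simp only [ha, Nat.factorial]
        push_cast
        ring
  intro k r hr
  have hr0 : (0:ℝ) ≤ r := hr.1
  have hnonneg : ∀ j : ℕ, 0 ≤ a j * r ^ (2*(j+1)) := by
    intro j
    apply mul_nonneg
    · rw [ha]; positivity
    · exact pow_nonneg hr0 _
  have hsum : Summable (fun j : ℕ => a j * r ^ (2*(j+1))) := by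
    refine Summable.of_nonneg_of_le hnonneg (fun j => ?_)
      (((Real.summable_pow_div_factorial (c₂ * r^2/4)).mul_left (c₁ * r^2/4)))
    · 
      have hf : (0:ℝ) < (Nat.factorial j : ℝ) := by exact_mod_cast Nat.factorial_pos _
      have hbound : c₁ * r^2/4 * ((c₂ * r^2/4)^j / (Nat.factorial j : ℝ))
          = c₁ * c₂^j * r^(2*(j+1)) / (4^(j+1) * (Nat.factorial j : ℝ)) := by
        rw [div_pow, mul_pow]
        field_simp
        ring
      rw [hbound]
      simp only [ha]
      rw [div_mul_eq_mul_div]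
      have h1 : (Nat.factorial j : ℝ) ≤ (Nat.factorial (j+1) : ℝ) := by
        exact_mod_cast Nat.factorial_le (Nat.le_succ j)
      have h2 : (1:ℝ) ≤ (Nat.factorial (j+1) : ℝ) := by
        exact_mod_cast Nat.one_le_iff_ne_zero.mpr (Nat.factorial_ne_zero (j+1))
      gcongr
      nlinarith
  constructor
  · rw [key k r]
  · rw [key k r]
    exact Summable.sum_le_tsum (Finset.range k) (fun j _ => hnonneg j) hsum
end
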